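/- arXiv:hep-th/0303044 — 2 statements merged into one kernel-verified Lean document; each statement's English description precedes it below -/
import Mathlib

section
/- Let μ₁ ≥ ... ≥ μ_k > 0, mₐ > 0, cᵢ ≥ 0, dₐ ≥ 0. Suppose δ⁺, δ⁻ ∈ (0, π/μ₁) satisfy Σᵢ μᵢ cᵢ [cot(μᵢ δ⁻) + cot(μᵢ δ⁺)] + Σₐ mₐ dₐ [coth(mₐ δ⁻) + coth(mₐ δ⁺)] = 0, with not all cᵢ, dₐ zero. Then δ⁺ + δ⁻ ≥ π/μ₁. -/
noncomputable def coth (x : ℝ) : ℝ := Real.cosh x / Real.sinh x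

lemma coth_pos {x : ℝ} (hx : 0 < x) : 0 < coth x :=
  div_pos (Real.cosh_pos x) (Real.sinh_pos_iff.mpr hx)

lemma cot_add_cot_pos {x y : ℝ} (hx : 0 < x) (hy : 0 < y) (hxy : x + y < Real.pi) :
    0 < Real.cot x + Real.cot y := by
  have hsx : 0 < Real.sin x := Real.sin_pos_of_pos_of_lt_pi hx (by linarith)
  have hsy : 0 < Real.sin y := Real.sin_pos_of_pos_of_lt_pi hy (by linarith)
  have hsxy : 0 < Real.sin (x + y) := Real.sin_pos_of_pos_of_lt_pi (by linarith) hxy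
  rw [Real.cot_eq_cos_div_sin, Real.cot_eq_cos_div_sin, div_add_div _ _ (ne_of_gt hsx) (ne_of_gt hsy)]
  apply div_pos _ (mul_pos hsx hsy)
  rw [Real.sin_add] at hsxy
  linarith

theorem delta_sum_ge (k l : ℕ) (hk : 0 < k)
    (μ : Fin k → ℝ) (m : Fin l → ℝ) (c : Fin k → ℝ) (d : Fin l → ℝ)
    (hμpos : ∀ i, 0 < μ i) (hμmono : ∀ i j : Fin k, i ≤ j → μ j ≤ μ i)
    (hm : ∀ a, 0 < m a) (hc : ∀ i, 0 ≤ c i) (hd : ∀ a, 0 ≤ d a)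
    (hnz : (∃ i, 0 < c i) ∨ (∃ a, 0 < d a))
    (δp δm : ℝ)
    (hδp : δp ∈ Set.Ioo 0 (Real.pi / μ ⟨0, hk⟩))
    (hδm : δm ∈ Set.Ioo 0 (Real.pi / μ ⟨0, hk⟩))
    (heq : (∑ i, μ i * c i * (Real.cot (μ i * δm) + Real.cot (μ i * δp))) +
      ∑ a, m a * d a * (coth (m a * δm) + coth (m a * δp)) = 0) :
    δp + δm ≥ Real.pi / μ ⟨0, hk⟩ := by
  by_contra h
  push_neg at h
  have hμ0 : 0 < μ ⟨0, hk⟩ := hμpos _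
  -- for each i, μ i * (δm + δp) < π
  have key : ∀ i : Fin k, 0 < Real.cot (μ i * δm) + Real.cot (μ i * δp) := by
    intro i
    have hle : μ i ≤ μ ⟨0, hk⟩ := hμmono ⟨0, hk⟩ i (Fin.mk_le_of_le_val (Nat.zero_le _))
    have h1 : μ i * (δm + δp) < Real.pi := by
      calc μ i * (δm + δp) ≤ μ ⟨0, hk⟩ * (δm + δp) := by
            apply mul_le_mul_of_nonneg_right hle (by linarith [hδp.1, hδm.1])
        _ < μ ⟨0, hk⟩ * (Real.pi / μ ⟨0, hk⟩) := by
            apply mul_lt_mul_of_pos_left (by linarith) hμ0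
        _ = Real.pi := by field_simp
    exact cot_add_cot_pos (mul_pos (hμpos i) hδm.1) (mul_pos (hμpos i) hδp.1)
      (by nlinarith [hμpos i])
  have cterm : ∀ i : Fin k, 0 ≤ μ i * c i * (Real.cot (μ i * δm) + Real.cot (μ i * δp)) := by
    intro i
    exact mul_nonneg (mul_nonneg (hμpos i).le (hc i)) (key i).le
  have kterm : ∀ a : Fin l, 0 < coth (m a * δm) + coth (m a * δp) := by
    intro a
    have := coth_pos (mul_pos (hm a) hδm.1)
    have := coth_pos (mul_pos (hm a) hδp.1)
    linarith
  have dterm : ∀ a : Fin l, 0 ≤ m a * d a * (coth (m a * δm) + coth (m a * δp)) := by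
    intro a
    exact mul_nonneg (mul_nonneg (hm a).le (hd a)) (kterm a).le
  have hS1 : 0 ≤ ∑ i, μ i * c i * (Real.cot (μ i * δm) + Real.cot (μ i * δp)) :=
    Finset.sum_nonneg fun i _ => cterm i
  have hS2 : 0 ≤ ∑ a, m a * d a * (coth (m a * δm) + coth (m a * δp)) :=
    Finset.sum_nonneg fun a _ => dterm a
  rcases hnz with ⟨i, hi⟩ | ⟨a, ha⟩
  · have hpos : 0 < ∑ i, μ i * c i * (Real.cot (μ i * δm) + Real.cot (μ i * δp)) := by
      apply Finset.sum_pos' (fun j _ => cterm j) ⟨i, Finset.mem_univ i, ?_⟩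
      exact mul_pos (mul_pos (hμpos i) hi) (key i)
    linarith
  · have hpos : 0 < ∑ a, m a * d a * (coth (m a * δm) + coth (m a * δp)) := by
      apply Finset.sum_pos' (fun b _ => dterm b) ⟨a, Finset.mem_univ a, ?_⟩
      exact mul_pos (mul_pos (hm a) ha) (kterm a)
    linarith
end

section
/- Let μ₁ > μ₂ ≥ ... ≥ μ_k > 0, mₐ > 0, cᵢ ≥ 0, dₐ ≥ 0, with either some dₐ > 0 or some cᵢ > 0 for an index i with μᵢ < μ₁. If δ⁻, δ⁺ ∈ (0, π/μ₁) satisfy 2 = Σᵢ μᵢ cᵢ cot(μᵢ δ⁻) + Σₐ mₐ dₐ coth(mₐ δ⁻) and −2 = Σᵢ μᵢ cᵢ cot(μᵢ δ⁺) + Σₐ mₐ dₐ coth(mₐ δ⁺), then δ⁺ + δ⁻ > π/μ₁ strictly. -/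
lemma cot_add_cot {x y : ℝ} (hx : Real.sin x ≠ 0) (hy : Real.sin y ≠ 0) :
    Real.cot x + Real.cot y = Real.sin (x + y) / (Real.sin x * Real.sin y) := by
  rw [Real.cot_eq_cos_div_sin, Real.cot_eq_cos_div_sin, Real.sin_add]
  field_simp
  ring

lemma cot_add_cot_nonneg {x y : ℝ} (hx : 0 < x) (hy : 0 < y)
    (hxy : x + y ≤ Real.pi) : 0 ≤ Real.cot x + Real.cot y := by
  have hxpi : x < Real.pi := lt_of_lt_of_le (by linarith) hxy
  have hypi : y < Real.pi := lt_of_lt_of_le (by linarith) hxy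
  have hsx : 0 < Real.sin x := Real.sin_pos_of_pos_of_lt_pi hx hxpi
  have hsy : 0 < Real.sin y := Real.sin_pos_of_pos_of_lt_pi hy hypi
  rw [cot_add_cot hsx.ne' hsy.ne']
  apply div_nonneg _ (le_of_lt (mul_pos hsx hsy))
  exact Real.sin_nonneg_of_nonneg_of_le_pi (by linarith) hxy

theorem delta_sum_gt (k l : ℕ) (hk : 0 < k)
    (μ : Fin k → ℝ) (m : Fin l → ℝ) (c : Fin k → ℝ) (d : Fin l → ℝ)
    (hμpos : ∀ i, 0 < μ i) (hμmono : ∀ i j : Fin k, i ≤ j → μ j ≤ μ i)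
    (hμtop : ∀ i : Fin k, i ≠ ⟨0, hk⟩ → μ i < μ ⟨0, hk⟩)
    (hm : ∀ a, 0 < m a) (hc : ∀ i, 0 ≤ c i) (hd : ∀ a, 0 ≤ d a)
    (hnz : (∃ a, 0 < d a) ∨ (∃ i, μ i < μ ⟨0, hk⟩ ∧ 0 < c i))
    (δm δp : ℝ)
    (hδm : δm ∈ Set.Ioo 0 (Real.pi / μ ⟨0, hk⟩))
    (hδp : δp ∈ Set.Ioo 0 (Real.pi / μ ⟨0, hk⟩))
    (heqm : 2 = (∑ i, μ i * c i * Real.cot (μ i * δm)) +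
      ∑ a, m a * d a * coth (m a * δm))
    (heqp : -2 = (∑ i, μ i * c i * Real.cot (μ i * δp)) +
      ∑ a, m a * d a * coth (m a * δp)) :
    δp + δm > Real.pi / μ ⟨0, hk⟩ := by
  by_contra hcon
  push_neg at hcon
  set μ0 := μ ⟨0, hk⟩ with hμ0
  have hμ0pos : 0 < μ0 := hμpos _
  obtain ⟨hδm0, hδm1⟩ := hδm
  obtain ⟨hδp0, hδp1⟩ := hδp
  -- μ0 * (δp + δm) ≤ π
  have hsumpi : μ0 * (δp + δm) ≤ Real.pi := by
    rw [mul_comm, ← le_div_iff₀ hμ0pos]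
    exact hcon
  have hμle : ∀ i, μ i ≤ μ0 := by
    intro i
    rcases eq_or_ne i ⟨0, hk⟩ with h | h
    · rw [h]
    · exact (hμtop i h).le
  -- key: 0 = sum of nonneg things
  have hzero : (0 : ℝ) =
      (∑ i, μ i * c i * (Real.cot (μ i * δm) + Real.cot (μ i * δp))) +
      ∑ a, m a * d a * (coth (m a * δm) + coth (m a * δp)) := by
    have := heqm
    have h2 : (2 : ℝ) + (-2) =
        ((∑ i, μ i * c i * Real.cot (μ i * δm)) + ∑ a, m a * d a * coth (m a * δm)) +
        ((∑ i, μ i * c i * Real.cot (μ i * δp)) + ∑ a, m a * d a * coth (m a * δp)) := by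
      rw [← heqm, ← heqp]
    simp only [Finset.sum_add_distrib, mul_add]
    linarith [h2]
  -- nonnegativity of each cot term
  have hcotnn : ∀ i : Fin k, 0 ≤ μ i * c i * (Real.cot (μ i * δm) + Real.cot (μ i * δp)) := by
    intro i
    apply mul_nonneg (mul_nonneg (hμpos i).le (hc i))
    apply cot_add_cot_nonneg (mul_pos (hμpos i) hδm0) (mul_pos (hμpos i) hδp0)
    have : μ i * δm + μ i * δp = μ i * (δp + δm) := by ring
    rw [this]
    calc μ i * (δp + δm) ≤ μ0 * (δp + δm) :=
          mul_le_mul_of_nonneg_right (hμle i) (by linarith)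
      _ ≤ Real.pi := hsumpi
  have hcothnn : ∀ a : Fin l, 0 ≤ m a * d a * (coth (m a * δm) + coth (m a * δp)) := by
    intro a
    apply mul_nonneg (mul_nonneg (hm a).le (hd a))
    have h1 := coth_pos (mul_pos (hm a) hδm0)
    have h2 := coth_pos (mul_pos (hm a) hδp0)
    linarith
  have hA : 0 ≤ ∑ i, μ i * c i * (Real.cot (μ i * δm) + Real.cot (μ i * δp)) :=
    Finset.sum_nonneg fun i _ => hcotnn i
  have hB : 0 ≤ ∑ a, m a * d a * (coth (m a * δm) + coth (m a * δp)) :=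
    Finset.sum_nonneg fun a _ => hcothnn a
  -- strict positivity
  have hpos : (0 : ℝ) <
      (∑ i, μ i * c i * (Real.cot (μ i * δm) + Real.cot (μ i * δp))) +
      ∑ a, m a * d a * (coth (m a * δm) + coth (m a * δp)) := by
    rcases hnz with ⟨a, ha⟩ | ⟨i, hμi, hci⟩
    · apply add_pos_of_nonneg_of_pos hA
      apply Finset.sum_pos' (fun b _ => hcothnn b) ⟨a, Finset.mem_univ a, ?_⟩
      have h1 := coth_pos (mul_pos (hm a) hδm0)
      have h2 := coth_pos (mul_pos (hm a) hδp0)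
      have := mul_pos (hm a) ha
      nlinarith
    · apply add_pos_of_pos_of_nonneg _ hB
      apply Finset.sum_pos' (fun j _ => hcotnn j) ⟨i, Finset.mem_univ i, ?_⟩
      apply mul_pos (mul_pos (hμpos i) hci)
      apply cot_add_cot_pos (mul_pos (hμpos i) hδm0) (mul_pos (hμpos i) hδp0)
      have heq : μ i * δm + μ i * δp = μ i * (δp + δm) := by ring
      rw [heq]
      calc μ i * (δp + δm) < μ0 * (δp + δm) :=
            mul_lt_mul_of_pos_right hμi (by linarith)
        _ ≤ Real.pi := hsumpi
  linarith [hzero, hpos]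
end
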